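/- For each i ∈ {1,…,n} let X_i and Y_i be nonnegative real random variables, with the family (X_1,…,X_n) mutually independent and the family (Y_1,…,Y_n) mutually independent. Suppose that for every i and every x ≥ 0, F_{X_i}(x) ≤ F_{Y_i}(x), where F denotes the cumulative distribution function. Then the n-period products satisfy F_{X_1 X_2 ⋯ X_n}(x) ≤ F_{Y_1 Y_2 ⋯ Y_n}(x) for all x ≥ 0; that is, first-order stochastic dominance in every period is sufficient for first-order stochastic dominance of the multi-period (product) returns. -/

import Mathlib

open MeasureTheory ProbabilityTheory

lemma fsd_mul_key
    {Ω : Type*} [MeasurableSpace Ω] (P : Measure Ω) [IsProbabilityMeasure P]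
    (S T S' T' : Ω → ℝ)
    (hS : Measurable S) (hT : Measurable T) (hS' : Measurable S') (hT' : Measurable T')
    (hSnn : ∀ ω, 0 ≤ S ω) (hT'nn : ∀ ω, 0 ≤ T' ω)
    (hST : IndepFun S T P) (hST' : IndepFun S' T' P)
    (hfS : ∀ x : ℝ, 0 ≤ x → P {ω | S ω ≤ x} ≤ P {ω | S' ω ≤ x})
    (hfT : ∀ x : ℝ, 0 ≤ x → P {ω | T ω ≤ x} ≤ P {ω | T' ω ≤ x})
    (x : ℝ) (hx : 0 ≤ x) :
    P {ω | S ω * T ω ≤ x} ≤ P {ω | S' ω * T' ω ≤ x} := by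
  set A : Set (ℝ × ℝ) := {p : ℝ × ℝ | p.1 * p.2 ≤ x} with hA
  have hAm : MeasurableSet A := by
    have : A = (fun p : ℝ × ℝ => p.1 * p.2) ⁻¹' Set.Iic x := rfl
    rw [this]
    exact (measurable_fst.mul measurable_snd) measurableSet_Iic
  have hmap : ∀ (U V : Ω → ℝ), Measurable U → Measurable V → IndepFun U V P →
      P {ω | U ω * V ω ≤ x} = ((P.map U).prod (P.map V)) A := by
    intro U V hU hV hUV
    have h1 : P.map (fun ω => (U ω, V ω)) = (P.map U).prod (P.map V) :=
      (indepFun_iff_map_prod_eq_prod_map_map hU.aemeasurable hV.aemeasurable).1 hUV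
    have h2 : {ω | U ω * V ω ≤ x} = (fun ω => (U ω, V ω)) ⁻¹' A := rfl
    rw [h2, ← Measure.map_apply (hU.prodMk hV) hAm, h1]
  -- CDF via map
  have hcdf : ∀ (U : Ω → ℝ), Measurable U → ∀ u : ℝ,
      (P.map U) (Set.Iic u) = P {ω | U ω ≤ u} := by
    intro U hU u
    rw [Measure.map_apply hU measurableSet_Iic]; rfl
  -- sections
  have hsec1 : ∀ s : ℝ, Prod.mk s ⁻¹' A = {t : ℝ | s * t ≤ x} := fun s => rfl
  -- step 1 -> 2 : compare T and T'
  rw [hmap S T hS hT hST, hmap S' T' hS' hT' hST']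
  have haenn : ∀ (U : Ω → ℝ), Measurable U → (∀ ω, 0 ≤ U ω) →
      (∀ᵐ u ∂(P.map U), 0 ≤ u) := by
    intro U hU hUnn
    rw [ae_iff]
    have hmeas : MeasurableSet {a : ℝ | ¬ 0 ≤ a} := by
      have : {a : ℝ | ¬ 0 ≤ a} = Set.Iio 0 := by ext a; simp
      rw [this]; exact measurableSet_Iio
    rw [Measure.map_apply hU hmeas,
      show (U ⁻¹' {a | ¬0 ≤ a}) = (∅ : Set Ω) by ext ω; simp [hUnn ω]]
    simp
  have hμSnn : ∀ᵐ s ∂(P.map S), 0 ≤ s := haenn S hS hSnn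
  have hμT'nn : ∀ᵐ t ∂(P.map T'), 0 ≤ t := haenn T' hT' hT'nn
  have step1 : ((P.map S).prod (P.map T)) A ≤ ((P.map S).prod (P.map T')) A := by
    rw [Measure.prod_apply hAm, Measure.prod_apply hAm]
    refine lintegral_mono_ae ?_
    filter_upwards [hμSnn] with s hs
    rcases eq_or_lt_of_le hs with h0 | h0
    · have : Prod.mk s ⁻¹' A = Set.univ := by
        ext t; simp [hsec1, A, ← h0, hx]
      rw [this, Measure.map_apply hT MeasurableSet.univ,
        Measure.map_apply hT' MeasurableSet.univ]; simp
    · have hset : Prod.mk s ⁻¹' A = Set.Iic (x / s) := by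
        ext t; simp only [hsec1, Set.mem_setOf_eq, Set.mem_Iic]
        rw [le_div_iff₀ h0, mul_comm]
      rw [hset, hcdf T hT, hcdf T' hT']
      exact hfT (x / s) (div_nonneg hx h0.le)
  have step2 : ((P.map S).prod (P.map T')) A ≤ ((P.map S').prod (P.map T')) A := by
    rw [Measure.prod_apply_symm hAm, Measure.prod_apply_symm hAm]
    refine lintegral_mono_ae ?_
    filter_upwards [hμT'nn] with t ht
    rcases eq_or_lt_of_le ht with h0 | h0
    · have : ((fun s => (s, t)) ⁻¹' A) = Set.univ := by
        ext s; simp [A, ← h0, hx]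
      rw [this, Measure.map_apply hS MeasurableSet.univ,
        Measure.map_apply hS' MeasurableSet.univ]; simp
    · have hset : ((fun s => (s, t)) ⁻¹' A) = Set.Iic (x / t) := by
        ext s; simp only [Set.mem_preimage, A, Set.mem_setOf_eq, Set.mem_Iic]
        rw [le_div_iff₀ h0]
      rw [hset, hcdf S hS, hcdf S' hS']
      exact hfS (x / t) (div_nonneg hx h0.le)
  exact le_trans step1 step2

/-- If, in each period `i`, the nonnegative return `X i` first-order
stochastically dominates `Y i`, and each family is mutually independent, then the
`n`-period product return `∏ i, X i` first-order stochastically dominates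
`∏ i, Y i`. -/
theorem fsd_of_products_of_fsd_each_period
    {Ω : Type*} [MeasurableSpace Ω] (P : Measure Ω) [IsProbabilityMeasure P]
    (n : ℕ) (X Y : Fin n → Ω → ℝ)
    (hX : ∀ i, Measurable (X i)) (hY : ∀ i, Measurable (Y i))
    (hXnn : ∀ i ω, 0 ≤ X i ω) (hYnn : ∀ i ω, 0 ≤ Y i ω)
    (hXindep : iIndepFun X P)
    (hYindep : iIndepFun Y P)
    (hfsd : ∀ i, ∀ x : ℝ, 0 ≤ x → P {ω | X i ω ≤ x} ≤ P {ω | Y i ω ≤ x}) :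
    ∀ x : ℝ, 0 ≤ x →
      P {ω | ∏ i, X i ω ≤ x} ≤ P {ω | ∏ i, Y i ω ≤ x} := by
  have aux : ∀ s : Finset (Fin n), ∀ x : ℝ, 0 ≤ x →
      P {ω | ∏ i ∈ s, X i ω ≤ x} ≤ P {ω | ∏ i ∈ s, Y i ω ≤ x} := by
    intro s
    induction s using Finset.induction_on with
    | empty => intro x hx; simp
    | @insert i s his ih =>
      intro x hx
      have hSX : Measurable (fun ω => ∏ j ∈ s, X j ω) :=
        Finset.measurable_prod s (fun j _ => hX j)
      have hSY : Measurable (fun ω => ∏ j ∈ s, Y j ω) :=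
        Finset.measurable_prod s (fun j _ => hY j)
      have hindX : IndepFun (fun ω => ∏ j ∈ s, X j ω) (X i) P := by
        have h := hXindep.indepFun_finsetProd_of_notMem hX his
        have e : (∏ j ∈ s, X j) = fun ω => ∏ j ∈ s, X j ω := by
          ext ω; simp
        rwa [e] at h
      have hindY : IndepFun (fun ω => ∏ j ∈ s, Y j ω) (Y i) P := by
        have h := hYindep.indepFun_finsetProd_of_notMem hY his
        have e : (∏ j ∈ s, Y j) = fun ω => ∏ j ∈ s, Y j ω := by
          ext ω; simp
        rwa [e] at h
      have key := fsd_mul_key P (fun ω => ∏ j ∈ s, X j ω) (X i)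
        (fun ω => ∏ j ∈ s, Y j ω) (Y i) hSX (hX i) hSY (hY i)
        (fun ω => Finset.prod_nonneg fun j _ => hXnn j ω)
        (fun ω => hYnn i ω) hindX hindY ih (hfsd i) x hx
      have e1 : {ω | ∏ j ∈ insert i s, X j ω ≤ x}
          = {ω | (∏ j ∈ s, X j ω) * X i ω ≤ x} := by
        ext ω; simp [Finset.prod_insert his, mul_comm]
      have e2 : {ω | ∏ j ∈ insert i s, Y j ω ≤ x}
          = {ω | (∏ j ∈ s, Y j ω) * Y i ω ≤ x} := by
        ext ω; simp [Finset.prod_insert his, mul_comm]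
      rw [e1, e2]; exact key
  intro x hx
  exact aux Finset.univ x hx
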